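/- Let n ≥ 1 and let u, v ∈ ℤ^n have equal coordinate sums. Then h(u − v) = −d(u,v). In particular, for k-element subsets I, J of {1,…,n}, ρ_J(e_I) = −d(e_I, e_J). -/

import Mathlib

open Finset

/-- Cyclic successor in `Fin n` (so the index after `n` is `1`). -/
def csucc {n : ℕ} (x : Fin n) : Fin n :=
  ⟨(x.val + 1) % n, Nat.mod_lt _ (Nat.lt_of_le_of_lt (Nat.zero_le _) x.isLt)⟩

/-- The linear functional `L_j(x) = Σ_{r=1}^{n−1} r·x_{j+r}` (subscripts mod `n`). -/
def Lfun {n : ℕ} (j : Fin n) (x : Fin n → ℝ) : ℝ :=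
  ∑ r : Fin n, (r.val : ℝ) * x (j + r)

/-- `h(x) = min_{1 ≤ j ≤ n} L_j(x)`. -/
noncomputable def hfun {n : ℕ} (x : Fin n → ℝ) : ℝ :=
  sInf (Set.range fun j : Fin n => Lfun j x)

lemma my_last_eq_neg_one {m : ℕ} : (Fin.last m) = -1 := by
  ext
  simp [Fin.coe_neg_one, Fin.val_last]

lemma csucc_eq {m : ℕ} (j : Fin (m+1)) : csucc j = j + 1 := by
  ext
  rw [Fin.val_add_one]
  simp only [csucc]
  by_cases h : j = Fin.last m
  · subst h; simp [Fin.val_last]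
  · rw [if_neg h, Nat.mod_eq_of_lt]
    have := Fin.val_lt_last h
    omega

lemma keysum {m : ℕ} (g : Fin (m+1) → ℝ) :
    ∑ r : Fin (m+1), (r.val : ℝ) * (g r - g (r - 1))
      = (m+1 : ℝ) * g (-1) - ∑ r : Fin (m+1), g r := by
  have h1 : ∑ r : Fin (m+1), (r.val : ℝ) * g (r - 1)
      = ∑ s : Fin (m+1), (((s + 1).val : ℝ)) * g s := by
    apply Fintype.sum_equiv (Equiv.subRight (1 : Fin (m+1)))
    intro x
    simp [Equiv.subRight]
  have h2 : ∀ s : Fin (m+1), ((s.val : ℝ)) - ((s + 1).val : ℝ)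
      = -1 + (if s = Fin.last m then ((m:ℝ)+1) else 0) := by
    intro s
    rw [Fin.val_add_one]
    by_cases hs : s = Fin.last m
    · subst hs
      simp [Fin.val_last]
    · rw [if_neg hs, if_neg hs]
      push_cast
      ring
  calc ∑ r : Fin (m+1), (r.val : ℝ) * (g r - g (r - 1))
      = ∑ r : Fin (m+1), ((r.val : ℝ) * g r - (r.val : ℝ) * g (r - 1)) := by
        apply Finset.sum_congr rfl; intros; ring
    _ = ∑ r : Fin (m+1), (r.val : ℝ) * g r - ∑ r : Fin (m+1), (r.val : ℝ) * g (r - 1) := by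
        rw [Finset.sum_sub_distrib]
    _ = ∑ s : Fin (m+1), ((s.val : ℝ) - ((s + 1).val : ℝ)) * g s := by
        rw [h1, ← Finset.sum_sub_distrib]
        apply Finset.sum_congr rfl; intros; ring
    _ = ∑ s : Fin (m+1), (-(g s) + (if s = Fin.last m then ((m:ℝ)+1) * g s else 0)) := by
        apply Finset.sum_congr rfl; intro s _
        rw [h2]
        by_cases hs : s = Fin.last m <;> simp [hs] <;> ring
    _ = (m+1 : ℝ) * g (-1) - ∑ r : Fin (m+1), g r := by
        rw [Finset.sum_add_distrib,
          Finset.sum_ite_eq' univ (Fin.last m) (fun s => ((m:ℝ)+1) * g s)]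
        simp [my_last_eq_neg_one]
        ring

/-- for `u, v ∈ ℤ^n` with equal coordinate sums, `h(u − v) = −d(u,v)`,
where `d(u,v) = Σ_j t_j` for the (unique) tuple `t` of nonnegative integers with
`min_j t_j = 0` and `u − v = Σ_j t_j (e_j − e_{j+1})`. -/
theorem stmt3 {n : ℕ} (hn : 1 ≤ n) (u v : Fin n → ℤ)
    (huv : ∑ i, u i = ∑ i, v i)
    (t : Fin n → ℤ) (ht0 : ∀ j, 0 ≤ t j) (htz : ∃ j, t j = 0)
    (ht : ∀ i, u i - v i = ∑ j : Fin n, t j *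
      ((if i = j then 1 else 0) - (if i = csucc j then 1 else 0))) :
    hfun (fun i => ((u i - v i : ℤ) : ℝ)) = -(∑ j : Fin n, (t j : ℝ)) := by
  obtain ⟨m, rfl⟩ : ∃ m, n = m + 1 := ⟨n - 1, by omega⟩
  set x : Fin (m+1) → ℝ := fun i => ((u i - v i : ℤ) : ℝ) with hxdef
  have hx : ∀ i, x i = (t i : ℝ) - (t (i - 1) : ℝ) := by
    intro i
    have key : ∑ j : Fin (m+1), t j * ((if i = j then 1 else 0) - (if i = csucc j then 1 else 0))
        = t i - t (i - 1) := by
      have hsplit : ∀ j : Fin (m+1),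
          t j * ((if i = j then 1 else 0) - (if i = csucc j then 1 else 0))
          = (if i = j then t j else 0) - (if i - 1 = j then t j else 0) := by
        intro j
        have hiff : (i = j + 1) ↔ (i - 1 = j) := by
          constructor
          · intro h; rw [h]; exact add_sub_cancel_right j 1
          · intro h; rw [← h]; exact (sub_add_cancel i 1).symm
        rw [csucc_eq]
        simp only [hiff]
        split_ifs <;> ring
      rw [Finset.sum_congr rfl (fun j _ => hsplit j), Finset.sum_sub_distrib,
        Finset.sum_ite_eq univ i t, Finset.sum_ite_eq univ (i-1) t]
      simp
    simp only [hxdef, ht i, key]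
    push_cast
    ring
  have hL : ∀ j : Fin (m+1), Lfun j x
      = ((m:ℝ)+1) * (t (j - 1) : ℝ) - ∑ i : Fin (m+1), (t i : ℝ) := by
    intro j
    have step : Lfun j x = ∑ r : Fin (m+1), (r.val : ℝ) *
        ((fun s => (t (j + s) : ℝ)) r - (fun s => (t (j + s) : ℝ)) (r - 1)) := by
      unfold Lfun
      apply Finset.sum_congr rfl
      intro r _
      rw [hx]
      simp [add_sub_assoc]
    rw [step, keysum (fun s => (t (j + s) : ℝ))]
    have e1 : j + -1 = j - 1 := by exact (sub_eq_add_neg j 1).symm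
    have e2 : ∑ r : Fin (m+1), (t (j + r) : ℝ) = ∑ i : Fin (m+1), (t i : ℝ) :=
      Fintype.sum_equiv (Equiv.addLeft j) _ _ (fun s => rfl)
    rw [e1, e2]
  have hlb : ∀ j : Fin (m+1), -(∑ i : Fin (m+1), (t i : ℝ)) ≤ Lfun j x := by
    intro j
    rw [hL]
    have h0 : (0:ℝ) ≤ ((m:ℝ)+1) * (t (j - 1) : ℝ) := by
      apply mul_nonneg (by positivity)
      exact_mod_cast ht0 (j - 1)
    linarith
  obtain ⟨j0, hj0⟩ := htz
  have hmem : Lfun (j0 + 1) x = -(∑ i : Fin (m+1), (t i : ℝ)) := by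
    rw [hL]
    simp [hj0]
  apply le_antisymm
  · rw [← hmem]
    exact csInf_le (Set.Finite.bddBelow (Set.finite_range _)) ⟨j0 + 1, rfl⟩
  · exact le_csInf (Set.range_nonempty _) (by rintro b ⟨j, rfl⟩; exact hlb j)
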